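/- Let X, Y, U_1, …, U_M, Z̃ = (Z̃^{(1)}, …, Z̃^{(K)}) and coverage indicators C = (C_{j,k})_{j ≤ M, k ≤ K} satisfy: (a) H(Y | X, U) = 0 with U = (U_1, …, U_M); (b) U_1, …, U_M mutually conditionally independent given X; (c) H(U | X) = H(Y | X); (d) C independent of (X, Y, U), P(C_{j,k} = 1) = α ∈ (0,1) for all j, k, with {C_{j,k}}_{k=1}^K mutually independent for each fixed j; (e) for every coverage configuration c with P(C = c) > 0 and every j such that c_{j,k} = 1 for some k, the conditional entropy H(U_j | X, Z̃) computed under P(· | C = c) equals 0. Then the expected recoverable information satisfies ∑_c P(C = c) · I(Z̃; Y | X) computed under P(· | C = c) ≥ H(Y | X) · (1 − (1 − α)^K) ≥ H(Y | X) · (1 − e^{−αK}). -/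

import Mathlib

open MeasureTheory ProbabilityTheory

/-- Shannon entropy (in nats) of a finitely-valued random variable `X` under `μ`. -/
noncomputable def entH {Ω : Type*} [MeasurableSpace Ω] (μ : Measure Ω)
    {S : Type*} [Fintype S] (X : Ω → S) : ℝ :=
  ∑ s : S, Real.negMulLog ((μ (X ⁻¹' {s})).toReal)

/-- Conditional Shannon entropy `H(Y | X) = H(X, Y) - H(X)`. -/
noncomputable def condEntH {Ω : Type*} [MeasurableSpace Ω] (μ : Measure Ω)
    {S T : Type*} [Fintype S] [Fintype T] (Y : Ω → T) (X : Ω → S) : ℝ :=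
  entH μ (fun ω => (X ω, Y ω)) - entH μ X

/-- Conditional mutual information `I(A; B | C) = H(A | C) - H(A | (B, C))`. -/
noncomputable def condMI {Ω : Type*} [MeasurableSpace Ω] (μ : Measure Ω)
    {A B C : Type*} [Fintype A] [Fintype B] [Fintype C]
    (fA : Ω → A) (fB : Ω → B) (fC : Ω → C) : ℝ :=
  condEntH μ fA fC - condEntH μ fA (fun ω => (fB ω, fC ω))

namespace SatLB

variable {Ω : Type*} [MeasurableSpace Ω] (μ : Measure Ω)

/-- All fibers are measurable. -/
def FM {S : Type*} (X : Ω → S) : Prop := ∀ s : S, MeasurableSet (X ⁻¹' {s})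

noncomputable def pm {S : Type*} (X : Ω → S) (s : S) : ℝ := (μ (X ⁻¹' {s})).toReal

lemma pm_nonneg {S : Type*} (X : Ω → S) (s : S) : 0 ≤ pm μ X s := ENNReal.toReal_nonneg

lemma FM.of_measurable {S : Type*} [MeasurableSpace S] [MeasurableSingletonClass S]
    {X : Ω → S} (hX : Measurable X) : FM X := fun s => hX (measurableSet_singleton s)

lemma FM.pair {S T : Type*} {X : Ω → S} {Y : Ω → T} (hX : FM X) (hY : FM Y) :
    FM (fun ω => (X ω, Y ω)) := by
  intro ⟨s, t⟩
  have : (fun ω => (X ω, Y ω)) ⁻¹' {(s, t)} = X ⁻¹' {s} ∩ Y ⁻¹' {t} := by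
    ext ω; simp [Prod.ext_iff]
  rw [this]; exact (hX s).inter (hY t)

lemma FM.comp {S T : Type*} [Fintype S] {X : Ω → S} (hX : FM X) (g : S → T) :
    FM (fun ω => g (X ω)) := by
  intro t
  have : (fun ω => g (X ω)) ⁻¹' {t} = ⋃ s ∈ {s : S | g s = t}, X ⁻¹' {s} := by
    ext ω; simp
  rw [this]
  exact MeasurableSet.biUnion (Set.to_countable _) fun s _ => hX s

lemma FM.tuple {ι : Type*} [Fintype ι] {π : ι → Type*} {F : ∀ i, Ω → π i}
    (h : ∀ i, FM (F i)) : FM (fun ω (i : ι) => F i ω) := by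
  intro u
  have : (fun ω (i : ι) => F i ω) ⁻¹' {u} = ⋂ i, (F i) ⁻¹' {u i} := by
    ext ω; simp [funext_iff]
  rw [this]
  exact MeasurableSet.iInter fun i => h i (u i)

/-- preimage-congruence for pm. -/
lemma pm_congr {S T : Type*} {X : Ω → S} {Y : Ω → T} {s : S} {t : T}
    (h : ∀ ω, X ω = s ↔ Y ω = t) : pm μ X s = pm μ Y t := by
  have hset : X ⁻¹' {s} = Y ⁻¹' {t} := by ext ω; simpa using h ω
  unfold pm; rw [hset]

variable [IsProbabilityMeasure μ]

lemma sum_pm {S : Type*} [Fintype S] {X : Ω → S} (hX : FM X) :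
    ∑ s : S, pm μ X s = 1 := by
  unfold pm
  rw [← ENNReal.toReal_sum (fun s _ => measure_ne_top μ _)]
  rw [sum_measure_preimage_singleton Finset.univ (fun s _ => hX s)]
  simp

lemma pm_marg_left {S T : Type*} [Fintype T] {X : Ω → S} {Y : Ω → T} (hX : FM X) (hY : FM Y)
    (s : S) : pm μ X s = ∑ t : T, pm μ (fun ω => (X ω, Y ω)) (s, t) := by
  unfold pm
  rw [← ENNReal.toReal_sum (fun t _ => measure_ne_top μ _)]
  congr 1
  have : X ⁻¹' {s} = ⋃ t : T, (fun ω => (X ω, Y ω)) ⁻¹' {(s, t)} := by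
    ext ω; simp [Prod.ext_iff]
  rw [this, measure_iUnion _ (fun t => (hX.pair hY) (s, t))]
  · rw [tsum_fintype]
  · intro t t' htt'
    simp only [Function.onFun, Set.disjoint_left]
    rintro ω h1 h2
    simp only [Set.mem_preimage, Set.mem_singleton_iff, Prod.ext_iff] at h1 h2
    exact htt' (by rw [← h1.2, h2.2])

lemma pm_marg_right {S T : Type*} [Fintype S] {X : Ω → S} {Y : Ω → T} (hX : FM X) (hY : FM Y)
    (t : T) : pm μ Y t = ∑ s : S, pm μ (fun ω => (X ω, Y ω)) (s, t) := by
  unfold pm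
  rw [← ENNReal.toReal_sum (fun s _ => measure_ne_top μ _)]
  congr 1
  have : Y ⁻¹' {t} = ⋃ s : S, (fun ω => (X ω, Y ω)) ⁻¹' {(s, t)} := by
    ext ω; simp [Prod.ext_iff]
  rw [this, measure_iUnion _ (fun s => (hX.pair hY) (s, t))]
  · rw [tsum_fintype]
  · intro s s' hss'
    simp only [Function.onFun, Set.disjoint_left]
    rintro ω h1 h2
    simp only [Set.mem_preimage, Set.mem_singleton_iff, Prod.ext_iff] at h1 h2
    exact hss' (by rw [← h1.1, h2.1])

end SatLB

namespace SatLB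

open Real

variable {Ω : Type*} [MeasurableSpace Ω] (μ : Measure Ω)

lemma entH_eq_sum_pm {S : Type*} [Fintype S] (X : Ω → S) :
    entH μ X = ∑ s : S, Real.negMulLog (pm μ X s) := rfl

/-- entropy is invariant under injective relabeling. -/
lemma entH_comp_inj {S T : Type*} [Fintype S] [Fintype T] (X : Ω → S) (f : S → T)
    (hf : Function.Injective f) : entH μ (fun ω => f (X ω)) = entH μ X := by
  classical
  unfold entH
  have key : ∀ s : S, (fun ω => f (X ω)) ⁻¹' {f s} = X ⁻¹' {s} := by
    intro s; ext ω; simp [hf.eq_iff]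
  rw [← Finset.sum_subset (Finset.subset_univ (Finset.univ.image f))]
  · rw [Finset.sum_image (fun s _ s' _ h => hf h)]
    exact Finset.sum_congr rfl fun s _ => by rw [key s]
  · intro t _ ht
    have : (fun ω => f (X ω)) ⁻¹' {t} = ∅ := by
      ext ω; simp only [Set.mem_preimage, Set.mem_singleton_iff, Set.mem_empty_iff_false,
        iff_false]
      intro h; exact ht (by simp [← h])
    simp [this]

variable [IsProbabilityMeasure μ]

lemma condEntH_eq_groups {S T : Type*} [Fintype S] [Fintype T] {X : Ω → S} {Y : Ω → T}
    (hX : FM X) (hY : FM Y) :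
    condEntH μ Y X = ∑ s : S, ((∑ t : T, Real.negMulLog (pm μ (fun ω => (X ω, Y ω)) (s, t)))
      - Real.negMulLog (∑ t : T, pm μ (fun ω => (X ω, Y ω)) (s, t))) := by
  unfold condEntH
  rw [entH_eq_sum_pm, entH_eq_sum_pm, Fintype.sum_prod_type, Finset.sum_sub_distrib]
  congr 1
  exact Finset.sum_congr rfl fun s _ => by rw [← pm_marg_left μ hX hY s]

lemma negMulLog_term_le {ι : Type*} [Fintype ι] (a : ι → ℝ) (ha : ∀ i, 0 ≤ a i) (i : ι) :
    -(a i * Real.log (∑ j, a j)) ≤ Real.negMulLog (a i) := by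
  rcases eq_or_lt_of_le (ha i) with h | h
  · simp [← h, Real.negMulLog]
  · have hS : a i ≤ ∑ j, a j := Finset.single_le_sum (fun j _ => ha j) (Finset.mem_univ i)
    have : Real.log (a i) ≤ Real.log (∑ j, a j) := Real.log_le_log h hS
    unfold Real.negMulLog
    nlinarith

lemma negMulLog_sum_le {ι : Type*} [Fintype ι] (a : ι → ℝ) (ha : ∀ i, 0 ≤ a i) :
    Real.negMulLog (∑ i, a i) ≤ ∑ i, Real.negMulLog (a i) := by
  have : Real.negMulLog (∑ i, a i) = ∑ i, -(a i * Real.log (∑ j, a j)) := by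
    rw [Real.negMulLog, neg_mul, Finset.sum_mul, Finset.sum_neg_distrib]
  rw [this]
  exact Finset.sum_le_sum fun i _ => negMulLog_term_le a ha i

lemma condEntH_nonneg {S T : Type*} [Fintype S] [Fintype T] {X : Ω → S} {Y : Ω → T}
    (hX : FM X) (hY : FM Y) : 0 ≤ condEntH μ Y X := by
  rw [condEntH_eq_groups μ hX hY]
  refine Finset.sum_nonneg fun s _ => ?_
  rw [sub_nonneg]
  exact negMulLog_sum_le _ (fun t => pm_nonneg μ _ _)

end SatLB

namespace SatLB

variable {Ω : Type*} [MeasurableSpace Ω] (μ : Measure Ω)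

/-- relabel the estimated variable. -/
lemma condEntH_comp_left {S T T' : Type*} [Fintype S] [Fintype T] [Fintype T']
    (X : Ω → S) (Y : Ω → T) (f : T → T') (hf : Function.Injective f) :
    condEntH μ (fun ω => f (Y ω)) X = condEntH μ Y X := by
  unfold condEntH
  congr 1
  exact entH_comp_inj μ (fun ω => (X ω, Y ω)) (fun p => (p.1, f p.2))
    (fun p q h => by
      obtain ⟨h1, h2⟩ := Prod.mk.injEq .. ▸ h
      exact Prod.ext h1 (hf h2))

/-- relabel the conditioning variable. -/
lemma condEntH_comp_right {S S' T : Type*} [Fintype S] [Fintype S'] [Fintype T]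
    (X : Ω → S) (Y : Ω → T) (f : S → S') (hf : Function.Injective f) :
    condEntH μ Y (fun ω => f (X ω)) = condEntH μ Y X := by
  unfold condEntH
  have h1 : entH μ (fun ω => (f (X ω), Y ω)) = entH μ (fun ω => (X ω, Y ω)) :=
    entH_comp_inj μ (fun ω => (X ω, Y ω)) (fun p => (f p.1, p.2))
      (fun p q h => by
        obtain ⟨h1, h2⟩ := Prod.mk.injEq .. ▸ h
        exact Prod.ext (hf h1) h2)
  have h2 : entH μ (fun ω => f (X ω)) = entH μ X := entH_comp_inj μ X f hf
  rw [h1, h2]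

/-- chain rule, splitting a pair: H((A,B)|W) = H(B|W) + H(A|(B,W)). -/
lemma condEntH_pair_split {SA SB SW : Type*} [Fintype SA] [Fintype SB] [Fintype SW]
    (A : Ω → SA) (B : Ω → SB) (W : Ω → SW) :
    condEntH μ (fun ω => (A ω, B ω)) W
      = condEntH μ B W + condEntH μ A (fun ω => (B ω, W ω)) := by
  unfold condEntH
  have h1 : entH μ (fun ω => (W ω, (A ω, B ω))) = entH μ (fun ω => ((B ω, W ω), A ω)) :=
    (entH_comp_inj μ (fun ω => (W ω, (A ω, B ω))) (fun p => ((p.2.2, p.1), p.2.1))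
      (fun p q h => by
        obtain ⟨⟨hb, hw⟩, ha⟩ : (p.2.2 = q.2.2 ∧ p.1 = q.1) ∧ p.2.1 = q.2.1 := by
          simpa [Prod.ext_iff] using h
        exact Prod.ext hw (Prod.ext ha hb))).symm
  have h2 : entH μ (fun ω => (W ω, B ω)) = entH μ (fun ω => (B ω, W ω)) :=
    entH_comp_inj μ (fun ω => (W ω, B ω)) (fun p => (p.2, p.1))
      (fun p q h => by
        obtain ⟨h1, h2⟩ : p.2 = q.2 ∧ p.1 = q.1 := by simpa [Prod.ext_iff] using h
        exact Prod.ext h2 h1) |>.symm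
  rw [h1, ← h2]
  ring

/-- entropy given a variable with subsingleton target is zero. -/
lemma condEntH_subsingleton {S T : Type*} [Fintype S] [Fintype T] [Subsingleton T] [Nonempty T]
    (W : Ω → S) (Y : Ω → T) : condEntH μ Y W = 0 := by
  inhabit T
  unfold condEntH
  rw [sub_eq_zero]
  have hY : (fun ω => (W ω, Y ω)) = fun ω => (W ω, (default : T)) := by
    funext ω; exact Prod.ext rfl (Subsingleton.elim _ _)
  rw [hY]
  exact entH_comp_inj μ W (fun w => (w, (default : T)))
    (fun p q h => by simpa [Prod.ext_iff] using h)

variable [IsProbabilityMeasure μ]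

lemma condEntH_le_pair {SA SB SW : Type*} [Fintype SA] [Fintype SB] [Fintype SW]
    {A : Ω → SA} {B : Ω → SB} {W : Ω → SW} (hA : FM A) (hB : FM B) (hW : FM W) :
    condEntH μ B W ≤ condEntH μ (fun ω => (A ω, B ω)) W := by
  rw [condEntH_pair_split μ A B W]
  have := condEntH_nonneg μ (hB.pair hW) hA
  linarith

end SatLB

namespace SatLB

variable {Ω : Type*} [MeasurableSpace Ω] (μ : Measure Ω) [IsProbabilityMeasure μ]

lemma pm_eq_zero_iff {S : Type*} {X : Ω → S} {s : S} :
    pm μ X s = 0 ↔ μ (X ⁻¹' {s}) = 0 := by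
  unfold pm
  rw [ENNReal.toReal_eq_zero_iff]
  exact ⟨fun h => h.resolve_right (measure_ne_top μ _), Or.inl⟩

lemma condEntH_eq_zero_of_ae {S T : Type*} [Fintype S] [Fintype T] {X : Ω → S} {Y : Ω → T}
    (hX : FM X) (hY : FM Y) (f : S → T) (hf : μ {ω | Y ω ≠ f (X ω)} = 0) :
    condEntH μ Y X = 0 := by
  classical
  rw [condEntH_eq_groups μ hX hY]
  refine Finset.sum_eq_zero fun s _ => ?_
  have hz : ∀ t : T, t ≠ f s → pm μ (fun ω => (X ω, Y ω)) (s, t) = 0 := by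
    intro t ht
    rw [pm_eq_zero_iff]
    refine measure_mono_null ?_ hf
    intro ω hω
    simp only [Set.mem_preimage, Set.mem_singleton_iff, Prod.ext_iff] at hω
    simp only [Set.mem_setOf_eq, hω.1, hω.2]
    exact ht
  have h1 : (∑ t : T, Real.negMulLog (pm μ (fun ω => (X ω, Y ω)) (s, t)))
      = Real.negMulLog (pm μ (fun ω => (X ω, Y ω)) (s, f s)) :=
    Finset.sum_eq_single _ (fun t _ ht => by rw [hz t ht, Real.negMulLog_zero]) (by simp)
  have h2 : (∑ t : T, pm μ (fun ω => (X ω, Y ω)) (s, t))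
      = pm μ (fun ω => (X ω, Y ω)) (s, f s) :=
    Finset.sum_eq_single _ (fun t _ ht => hz t ht) (by simp)
  rw [h1, h2, sub_self]

lemma exists_ae_of_condEntH_eq_zero {S T : Type*} [Fintype S] [Fintype T] [Nonempty T]
    {X : Ω → S} {Y : Ω → T} (hX : FM X) (hY : FM Y) (h : condEntH μ Y X = 0) :
    ∃ f : S → T, μ {ω | Y ω ≠ f (X ω)} = 0 := by
  classical
  set p : S → T → ℝ := fun s t => pm μ (fun ω => (X ω, Y ω)) (s, t) with hp
  have hpnn : ∀ s t, 0 ≤ p s t := fun s t => pm_nonneg μ _ _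
  -- each group vanishes
  rw [condEntH_eq_groups μ hX hY] at h
  have hgz : ∀ s : S, (∑ t : T, Real.negMulLog (p s t)) - Real.negMulLog (∑ t : T, p s t) = 0 := by
    intro s
    have := (Finset.sum_eq_zero_iff_of_nonneg (fun s _ => by
      rw [sub_nonneg]; exact negMulLog_sum_le _ (fun t => hpnn s t))).mp h s (Finset.mem_univ s)
    exact this
  -- dichotomy
  have hdich : ∀ s t, p s t = 0 ∨ p s t = ∑ t' : T, p s t' := by
    intro s t
    have hsum : (∑ t : T, -(p s t * Real.log (∑ t' : T, p s t')))
        = ∑ t : T, Real.negMulLog (p s t) := by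
      have e : Real.negMulLog (∑ t' : T, p s t') = ∑ t : T, -(p s t * Real.log (∑ t' : T, p s t')) := by
        rw [Real.negMulLog, neg_mul, Finset.sum_mul, Finset.sum_neg_distrib]
      have := hgz s
      linarith [e ▸ this]
    have hterm := (Finset.sum_eq_sum_iff_of_le (fun t _ => negMulLog_term_le (p s) (hpnn s) t)).mp
      hsum t (Finset.mem_univ t)
    -- hterm : -(p s t * log (∑ ..)) = negMulLog (p s t)
    rcases eq_or_lt_of_le (hpnn s t) with h0 | h0
    · exact Or.inl h0.symm
    · right
      have hS : p s t ≤ ∑ t' : T, p s t' := Finset.single_le_sum (fun t' _ => hpnn s t') (Finset.mem_univ t)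
      have hSpos : 0 < ∑ t' : T, p s t' := lt_of_lt_of_le h0 hS
      have hlog : Real.log (p s t) = Real.log (∑ t' : T, p s t') := by
        rw [Real.negMulLog] at hterm
        have hpe : p s t * Real.log (p s t) = p s t * Real.log (∑ t' : T, p s t') := by
          linarith
        exact mul_left_cancel₀ (ne_of_gt h0) hpe
      exact Real.log_injOn_pos (Set.mem_Ioi.mpr h0) (Set.mem_Ioi.mpr hSpos) hlog
  -- define f
  have hmarg : ∀ s, pm μ X s = ∑ t : T, p s t := fun s => pm_marg_left μ hX hY s
  refine ⟨fun s => if hex : ∃ t, 0 < p s t then hex.choose else Classical.arbitrary T, ?_⟩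
  set f : S → T := fun s => if hex : ∃ t, 0 < p s t then hex.choose else Classical.arbitrary T with hfdef
  have hkey : ∀ s t, t ≠ f s → p s t = 0 := by
    intro s t ht
    by_contra hne
    have hpos : 0 < p s t := lt_of_le_of_ne (hpnn s t) (Ne.symm hne)
    have hex : ∃ t, 0 < p s t := ⟨t, hpos⟩
    have hfs : f s = hex.choose := by rw [hfdef]; simp [hex]
    have hfspos : 0 < p s (f s) := hfs ▸ hex.choose_spec
    have h1 : p s t = ∑ t' : T, p s t' := (hdich s t).resolve_left (ne_of_gt hpos)
    have h2 : p s (f s) = ∑ t' : T, p s t' := (hdich s (f s)).resolve_left (ne_of_gt hfspos)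
    have e1 : ∑ t' : T, p s t' = p s t + ∑ t' ∈ Finset.univ.erase t, p s t' :=
      (Finset.add_sum_erase _ (p s) (Finset.mem_univ t)).symm
    have e2 : p s (f s) ≤ ∑ t' ∈ Finset.univ.erase t, p s t' :=
      Finset.single_le_sum (fun t' _ => hpnn s t')
        (Finset.mem_erase.mpr ⟨Ne.symm ht, Finset.mem_univ _⟩)
    linarith
  -- conclude null set
  have hcover : {ω | Y ω ≠ f (X ω)} ⊆ ⋃ st : S × T, if st.2 ≠ f st.1 then
      (fun ω => (X ω, Y ω)) ⁻¹' {st} else ∅ := by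
    intro ω hω
    refine Set.mem_iUnion.mpr ⟨(X ω, Y ω), ?_⟩
    rw [if_pos (show (X ω, Y ω).2 ≠ f (X ω, Y ω).1 from hω)]
    rfl
  refine measure_mono_null hcover (measure_iUnion_null fun st => ?_)
  by_cases hst : st.2 ≠ f st.1
  · rw [if_pos hst]
    exact pm_eq_zero_iff μ |>.mp (hkey st.1 st.2 hst)
  · rw [if_neg hst]; exact measure_empty

end SatLB

namespace SatLB

variable {Ω : Type*} [MeasurableSpace Ω] (μ : Measure Ω) [IsProbabilityMeasure μ]

lemma sum_negMulLog_mul_row {ι : Type*} [Fintype ι] (c : ℝ) (r : ι → ℝ)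
    (hsum : ∑ i, r i = 1) :
    ∑ i, Real.negMulLog (c * r i) = Real.negMulLog c + c * ∑ i, Real.negMulLog (r i) := by
  simp only [Real.negMulLog_mul]
  rw [Finset.sum_add_distrib, ← Finset.sum_mul, hsum, one_mul, ← Finset.mul_sum]

/-- If `A` and `B` are conditionally independent given `X` (at the level of the joint pmf),
then additionally conditioning on `B` does not change the conditional entropy of `A`. -/
lemma condEntH_factor {SA SB SX : Type*} [Fintype SA] [Fintype SB] [Fintype SX]
    {A : Ω → SA} {B : Ω → SB} {X : Ω → SX} (hA : FM A) (hB : FM B) (hX : FM X)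
    (hfac : ∀ x b a, pm μ (fun ω => (X ω, B ω, A ω)) (x, b, a) * pm μ X x
      = pm μ (fun ω => (X ω, B ω)) (x, b) * pm μ (fun ω => (X ω, A ω)) (x, a)) :
    condEntH μ A (fun ω => (B ω, X ω)) = condEntH μ A X := by
  classical
  set p3 : SX → SB → SA → ℝ := fun x b a => pm μ (fun ω => (X ω, B ω, A ω)) (x, b, a) with hp3def
  set pXB : SX → SB → ℝ := fun x b => pm μ (fun ω => (X ω, B ω)) (x, b) with hpXBdef
  set pXA : SX → SA → ℝ := fun x a => pm μ (fun ω => (X ω, A ω)) (x, a) with hpXAdef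
  set pX : SX → ℝ := fun x => pm μ X x with hpXdef
  have hp3nn : ∀ x b a, 0 ≤ p3 x b a := fun x b a => pm_nonneg μ _ _
  have hpXBnn : ∀ x b, 0 ≤ pXB x b := fun x b => pm_nonneg μ _ _
  have hpXAnn : ∀ x a, 0 ≤ pXA x a := fun x a => pm_nonneg μ _ _
  have hpXnn : ∀ x, 0 ≤ pX x := fun x => pm_nonneg μ _ _
  have hpXB : ∀ x b, pXB x b = ∑ a : SA, p3 x b a := by
    intro x b
    rw [hpXBdef]
    simp only
    rw [pm_marg_left μ (hX.pair hB) hA (x, b)]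
    exact Finset.sum_congr rfl fun a _ => pm_congr μ (fun ω => by simp [Prod.ext_iff]; tauto)
  have hpXA : ∀ x a, pXA x a = ∑ b : SB, p3 x b a := by
    intro x a
    rw [hpXAdef]
    simp only
    rw [pm_marg_left μ (hX.pair hA) hB (x, a)]
    exact Finset.sum_congr rfl fun b _ => pm_congr μ (fun ω => by simp [Prod.ext_iff]; tauto)
  have hpX : ∀ x, pX x = ∑ b : SB, ∑ a : SA, p3 x b a := by
    intro x
    rw [hpXdef]
    simp only
    rw [pm_marg_left μ hX (hB.pair hA) x, Fintype.sum_prod_type]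
  have hpXBle : ∀ x b, pXB x b ≤ pX x := by
    intro x b
    rw [hpXB, hpX]
    exact Finset.single_le_sum (fun b _ => Finset.sum_nonneg fun a _ => hp3nn x b a)
      (Finset.mem_univ b)
  have hpXAle : ∀ x a, pXA x a ≤ pX x := by
    intro x a
    rw [hpXA, hpX, Finset.sum_comm]
    exact Finset.single_le_sum (fun a _ => Finset.sum_nonneg fun b _ => hp3nn x b a)
      (Finset.mem_univ a)
  set r : SX → SA → ℝ := fun x a => if pX x = 0 then 0 else pXA x a / pX x with hrdef
  have hrsum : ∀ x, pX x ≠ 0 → ∑ a : SA, r x a = 1 := by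
    intro x h0
    rw [hrdef]
    simp only [if_neg h0]
    rw [← Finset.sum_div]
    rw [div_eq_one_iff_eq h0]
    rw [hpX, Finset.sum_comm]
    exact Finset.sum_congr rfl fun a _ => hpXA x a
  have hfact3 : ∀ x b a, p3 x b a = pXB x b * r x a := by
    intro x b a
    by_cases h0 : pX x = 0
    · have : p3 x b a = 0 := le_antisymm (by
        calc p3 x b a ≤ pXB x b := by
              rw [hpXB]; exact Finset.single_le_sum (fun a _ => hp3nn x b a) (Finset.mem_univ a)
          _ ≤ pX x := hpXBle x b
          _ = 0 := h0) (hp3nn x b a)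
      rw [this, hrdef]; simp [h0]
    · rw [hrdef]; simp only [if_neg h0]
      have := hfac x b a
      field_simp
      linarith
  have hfact2 : ∀ x a, pXA x a = pX x * r x a := by
    intro x a
    by_cases h0 : pX x = 0
    · have : pXA x a = 0 := le_antisymm (h0 ▸ hpXAle x a) (hpXAnn x a)
      rw [this, h0]; ring
    · rw [hrdef]; simp only [if_neg h0]
      field_simp
  set Hr : SX → ℝ := fun x => ∑ a : SA, Real.negMulLog (r x a) with hHrdef
  -- entropy expressions
  have claimA : ∀ x b, ∑ a : SA, Real.negMulLog (p3 x b a)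
      = Real.negMulLog (pXB x b) + pXB x b * Hr x := by
    intro x b
    by_cases h0 : pX x = 0
    · have hb0 : pXB x b = 0 := le_antisymm (h0 ▸ hpXBle x b) (hpXBnn x b)
      have : ∀ a, p3 x b a = 0 := fun a => by rw [hfact3 x b a, hb0, zero_mul]
      simp [this, hb0, Real.negMulLog_zero]
    · have : ∀ a : SA, Real.negMulLog (p3 x b a) = Real.negMulLog (pXB x b * r x a) :=
        fun a => by rw [hfact3 x b a]
      rw [Finset.sum_congr rfl (fun a _ => this a)]
      exact sum_negMulLog_mul_row _ _ (hrsum x h0)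
  have claimB : ∀ x, ∑ a : SA, Real.negMulLog (pXA x a)
      = Real.negMulLog (pX x) + pX x * Hr x := by
    intro x
    by_cases h0 : pX x = 0
    · have : ∀ a, pXA x a = 0 := fun a => le_antisymm (h0 ▸ hpXAle x a) (hpXAnn x a)
      simp [this, h0, Real.negMulLog_zero]
    · have : ∀ a : SA, Real.negMulLog (pXA x a) = Real.negMulLog (pX x * r x a) :=
        fun a => by rw [hfact2 x a]
      rw [Finset.sum_congr rfl (fun a _ => this a)]
      exact sum_negMulLog_mul_row _ _ (hrsum x h0)
  have hsumB : ∀ x, ∑ b : SB, pXB x b = pX x := by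
    intro x
    rw [hpX]
    exact Finset.sum_congr rfl fun b _ => hpXB x b
  -- assemble
  have e1 : entH μ (fun ω => ((B ω, X ω), A ω))
      = ∑ x : SX, ∑ b : SB, ∑ a : SA, Real.negMulLog (p3 x b a) := by
    rw [entH_eq_sum_pm]
    simp only [Fintype.sum_prod_type]
    rw [Finset.sum_comm]
    refine Finset.sum_congr rfl fun x _ => Finset.sum_congr rfl fun b _ =>
      Finset.sum_congr rfl fun a _ => ?_
    congr 1
    exact pm_congr μ (fun ω => by simp [Prod.ext_iff]; tauto)
  have e2 : entH μ (fun ω => (B ω, X ω)) = ∑ x : SX, ∑ b : SB, Real.negMulLog (pXB x b) := by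
    rw [entH_eq_sum_pm, Fintype.sum_prod_type, Finset.sum_comm]
    refine Finset.sum_congr rfl fun x _ => Finset.sum_congr rfl fun b _ => ?_
    congr 1
    exact pm_congr μ (fun ω => by simp [Prod.ext_iff]; tauto)
  have e3 : entH μ (fun ω => (X ω, A ω)) = ∑ x : SX, ∑ a : SA, Real.negMulLog (pXA x a) := by
    rw [entH_eq_sum_pm, Fintype.sum_prod_type]
  have e4 : entH μ X = ∑ x : SX, Real.negMulLog (pX x) := rfl
  unfold condEntH
  rw [e1, e2, e3, e4]
  have lhs_eq : ∀ x : SX, ∑ b : SB, ∑ a : SA, Real.negMulLog (p3 x b a)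
      = (∑ b : SB, Real.negMulLog (pXB x b)) + pX x * Hr x := by
    intro x
    rw [Finset.sum_congr rfl (fun b _ => claimA x b), Finset.sum_add_distrib,
      ← Finset.sum_mul, hsumB x]
  rw [Finset.sum_congr rfl (fun x _ => lhs_eq x), Finset.sum_congr rfl (fun x _ => claimB x)]
  rw [Finset.sum_add_distrib, Finset.sum_add_distrib]
  ring

end SatLB

namespace SatLB

/-- Unnormalized nonnegativity of mutual information for a nonnegative matrix. -/
lemma matrix_mi_nonneg {V A : Type*} [Fintype V] [Fintype A] (q : V → A → ℝ)
    (hq : ∀ v a, 0 ≤ q v a) (pA : A → ℝ) (pV : V → ℝ) (S : ℝ)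
    (hpA : ∀ a, pA a = ∑ v : V, q v a) (hpV : ∀ v, pV v = ∑ a : A, q v a)
    (hS : S = ∑ v : V, ∑ a : A, q v a) :
    0 ≤ (∑ a : A, Real.negMulLog (pA a)) + (∑ v : V, Real.negMulLog (pV v))
        - Real.negMulLog S - ∑ v : V, ∑ a : A, Real.negMulLog (q v a) := by
  classical
  have hpAnn : ∀ a, 0 ≤ pA a := fun a => (hpA a) ▸ Finset.sum_nonneg fun v _ => hq v a
  have hpVnn : ∀ v, 0 ≤ pV v := fun v => (hpV v) ▸ Finset.sum_nonneg fun a _ => hq v a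
  have hSnn : 0 ≤ S := hS ▸ Finset.sum_nonneg fun v _ => Finset.sum_nonneg fun a _ => hq v a
  have hSc : ∑ a : A, pA a = S := by
    rw [hS, Finset.sum_comm]; exact Finset.sum_congr rfl fun a _ => hpA a
  have hSV : ∑ v : V, pV v = S := by
    rw [hS]; exact Finset.sum_congr rfl fun v _ => hpV v
  by_cases hS0 : S = 0
  · have hq0 : ∀ v a, q v a = 0 := by
      intro v a
      have h1 : pV v = 0 := le_antisymm (by
          rw [← hSV] at hS0
          exact hS0 ▸ Finset.single_le_sum (fun v _ => hpVnn v) (Finset.mem_univ v))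
        (hpVnn v)
      rw [hpV] at h1
      exact le_antisymm (h1 ▸ Finset.single_le_sum (fun a _ => hq v a) (Finset.mem_univ a))
        (hq v a)
    have hpA0 : ∀ a, pA a = 0 := fun a => by rw [hpA]; simp [hq0]
    have hpV0 : ∀ v, pV v = 0 := fun v => by rw [hpV]; simp [hq0]
    simp [hq0, hpA0, hpV0, hS0, Real.negMulLog_zero]
  have hSpos : 0 < S := lt_of_le_of_ne hSnn (Ne.symm hS0)
  set f : V → A → ℝ := fun v a => q v a * Real.log (q v a) - q v a * Real.log (pA a)
      - q v a * Real.log (pV v) + q v a * Real.log S with hf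
  have hterm : ∀ v a, q v a - pA a * pV v / S ≤ f v a := by
    intro v a
    rcases eq_or_lt_of_le (hq v a) with h0 | h0
    · have hq0 : q v a = 0 := h0.symm
      have hfz : f v a = 0 := by rw [hf]; simp [hq0]
      rw [hfz, hq0]
      have := div_nonneg (mul_nonneg (hpAnn a) (hpVnn v)) hSnn
      linarith
    · have hpApos : 0 < pA a := lt_of_lt_of_le h0
        ((hpA a) ▸ Finset.single_le_sum (fun v _ => hq v a) (Finset.mem_univ v))
      have hpVpos : 0 < pV v := lt_of_lt_of_le h0
        ((hpV v) ▸ Finset.single_le_sum (fun a _ => hq v a) (Finset.mem_univ a))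
      have hx : 0 < pA a * pV v / S / q v a := by positivity
      have hlog := Real.log_le_sub_one_of_pos hx
      have hrw : Real.log (pA a * pV v / S / q v a)
          = Real.log (pA a) + Real.log (pV v) - Real.log S - Real.log (q v a) := by
        rw [Real.log_div (by positivity) (ne_of_gt h0),
          Real.log_div (by positivity) (ne_of_gt hSpos),
          Real.log_mul (ne_of_gt hpApos) (ne_of_gt hpVpos)]
      rw [hrw] at hlog
      have h2' : q v a * Real.log (pA a) + q v a * Real.log (pV v) - q v a * Real.log S
          - q v a * Real.log (q v a) ≤ pA a * pV v / S - q v a := by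
        calc q v a * Real.log (pA a) + q v a * Real.log (pV v) - q v a * Real.log S
            - q v a * Real.log (q v a)
            = q v a * (Real.log (pA a) + Real.log (pV v) - Real.log S - Real.log (q v a)) := by
              ring
          _ ≤ q v a * (pA a * pV v / S / q v a - 1) :=
              mul_le_mul_of_nonneg_left hlog (le_of_lt h0)
          _ = pA a * pV v / S - q v a := by field_simp
      rw [hf]
      simp only
      linarith
  have ev1 : ∑ v : V, ∑ a : A, q v a * Real.log (pA a) = ∑ a : A, pA a * Real.log (pA a) := by
    rw [Finset.sum_comm]
    exact Finset.sum_congr rfl fun a _ => by rw [← Finset.sum_mul, ← hpA a]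
  have ev2 : ∑ v : V, ∑ a : A, q v a * Real.log (pV v) = ∑ v : V, pV v * Real.log (pV v) :=
    Finset.sum_congr rfl fun v _ => by rw [← Finset.sum_mul, ← hpV v]
  have ev3 : ∑ v : V, ∑ a : A, q v a * Real.log S = S * Real.log S := by
    rw [← hSV, Finset.sum_mul]
    exact Finset.sum_congr rfl fun v _ => by rw [← Finset.sum_mul, ← hpV v]
  have evf : ∑ v : V, ∑ a : A, f v a
      = (∑ v : V, ∑ a : A, q v a * Real.log (q v a)) - (∑ a : A, pA a * Real.log (pA a))
        - (∑ v : V, pV v * Real.log (pV v)) + S * Real.log S := by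
    rw [hf]
    simp only [Finset.sum_add_distrib, Finset.sum_sub_distrib]
    rw [ev1, ev2, ev3]
  have evQ : ∑ v : V, ∑ a : A, (q v a - pA a * pV v / S) = 0 := by
    have hQ : ∀ v, ∑ a : A, pA a * pV v / S = pV v := by
      intro v
      rw [← Finset.sum_div, ← Finset.sum_mul, hSc]
      exact mul_div_cancel_left₀ _ hS0
    simp only [Finset.sum_sub_distrib]
    rw [Finset.sum_congr rfl (fun v _ => hQ v)]
    rw [sub_eq_zero]
    exact Finset.sum_congr rfl fun v _ => (hpV v).symm
  have hmain : 0 ≤ ∑ v : V, ∑ a : A, f v a := by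
    rw [← evQ]
    exact Finset.sum_le_sum fun v _ => Finset.sum_le_sum fun a _ => hterm v a
  have hgoal : (∑ a : A, Real.negMulLog (pA a)) + (∑ v : V, Real.negMulLog (pV v))
      - Real.negMulLog S - (∑ v : V, ∑ a : A, Real.negMulLog (q v a))
      = ∑ v : V, ∑ a : A, f v a := by
    rw [evf]
    simp only [Real.negMulLog, neg_mul, Finset.sum_neg_distrib]
    ring
  rw [hgoal]
  exact hmain

end SatLB

namespace SatLB

variable {Ω : Type*} [MeasurableSpace Ω] (μ : Measure Ω) [IsProbabilityMeasure μ]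

/-- Conditioning on more variables cannot increase conditional entropy. -/
lemma condEntH_pair_cond_le {SA SV SW : Type*} [Fintype SA] [Fintype SV] [Fintype SW]
    {A : Ω → SA} {V : Ω → SV} {W : Ω → SW} (hA : FM A) (hV : FM V) (hW : FM W) :
    condEntH μ A (fun ω => (V ω, W ω)) ≤ condEntH μ A W := by
  classical
  set q3 : SV → SW → SA → ℝ := fun v w a => pm μ (fun ω => (V ω, W ω, A ω)) (v, w, a) with hq3
  have hq3nn : ∀ v w a, 0 ≤ q3 v w a := fun v w a => pm_nonneg μ _ _
  set pVW : SV → SW → ℝ := fun v w => ∑ a : SA, q3 v w a with hpVW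
  set pWA : SW → SA → ℝ := fun w a => ∑ v : SV, q3 v w a with hpWA
  set pW : SW → ℝ := fun w => ∑ v : SV, ∑ a : SA, q3 v w a with hpW
  have hpVWm : ∀ v w, pm μ (fun ω => (V ω, W ω)) (v, w) = pVW v w := by
    intro v w
    rw [pm_marg_left μ (hV.pair hW) hA (v, w)]
    exact Finset.sum_congr rfl fun a _ => pm_congr μ (fun ω => by simp [Prod.ext_iff]; tauto)
  have hpWAm : ∀ w a, pm μ (fun ω => (W ω, A ω)) (w, a) = pWA w a := by
    intro w a
    rw [pm_marg_right μ hV (hW.pair hA) (w, a)]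
  have hpWm : ∀ w, pm μ W w = pW w := by
    intro w
    rw [pm_marg_right μ hV hW w]
    exact Finset.sum_congr rfl fun v _ => hpVWm v w
  have E1 : entH μ (fun ω => ((V ω, W ω), A ω))
      = ∑ w : SW, ∑ v : SV, ∑ a : SA, Real.negMulLog (q3 v w a) := by
    rw [entH_eq_sum_pm]
    simp only [Fintype.sum_prod_type]
    rw [Finset.sum_comm]
    refine Finset.sum_congr rfl fun w _ => Finset.sum_congr rfl fun v _ =>
      Finset.sum_congr rfl fun a _ => ?_
    congr 1
    exact pm_congr μ (fun ω => by simp [Prod.ext_iff]; tauto)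
  have E2 : entH μ (fun ω => (V ω, W ω)) = ∑ w : SW, ∑ v : SV, Real.negMulLog (pVW v w) := by
    rw [entH_eq_sum_pm]
    simp only [Fintype.sum_prod_type]
    rw [Finset.sum_comm]
    exact Finset.sum_congr rfl fun w _ => Finset.sum_congr rfl fun v _ => by rw [hpVWm v w]
  have E3 : entH μ (fun ω => (W ω, A ω)) = ∑ w : SW, ∑ a : SA, Real.negMulLog (pWA w a) := by
    rw [entH_eq_sum_pm]
    simp only [Fintype.sum_prod_type]
    exact Finset.sum_congr rfl fun w _ => Finset.sum_congr rfl fun a _ => by rw [hpWAm w a]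
  have E4 : entH μ W = ∑ w : SW, Real.negMulLog (pW w) := by
    rw [entH_eq_sum_pm]
    exact Finset.sum_congr rfl fun w _ => by rw [hpWm w]
  have key : 0 ≤ condEntH μ A W - condEntH μ A (fun ω => (V ω, W ω)) := by
    unfold condEntH
    rw [E1, E2, E3, E4]
    have : (∑ w : SW, ∑ a : SA, Real.negMulLog (pWA w a)) - (∑ w : SW, Real.negMulLog (pW w))
        - ((∑ w : SW, ∑ v : SV, ∑ a : SA, Real.negMulLog (q3 v w a))
          - ∑ w : SW, ∑ v : SV, Real.negMulLog (pVW v w))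
        = ∑ w : SW, ((∑ a : SA, Real.negMulLog (pWA w a))
            + (∑ v : SV, Real.negMulLog (pVW v w)) - Real.negMulLog (pW w)
            - ∑ v : SV, ∑ a : SA, Real.negMulLog (q3 v w a)) := by
      simp only [Finset.sum_add_distrib, Finset.sum_sub_distrib]
      ring
    rw [this]
    refine Finset.sum_nonneg fun w _ => ?_
    exact matrix_mi_nonneg (fun v a => q3 v w a) (fun v a => hq3nn v w a)
      (fun a => pWA w a) (fun v => pVW v w) (pW w)
      (fun a => rfl) (fun v => rfl) rfl
  linarith

end SatLB

namespace SatLB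

variable {Ω : Type*} [MeasurableSpace Ω] (μ : Measure Ω)

/-- Symmetry of conditional mutual information. -/
lemma condMI_symm {A B C : Type*} [Fintype A] [Fintype B] [Fintype C]
    (fA : Ω → A) (fB : Ω → B) (fC : Ω → C) :
    condMI μ fA fB fC = condEntH μ fB fC - condEntH μ fB (fun ω => (fA ω, fC ω)) := by
  unfold condMI condEntH
  have r1 : entH μ (fun ω => (fC ω, fA ω)) = entH μ (fun ω => (fA ω, fC ω)) :=
    entH_comp_inj μ (fun ω => (fA ω, fC ω)) (fun p => (p.2, p.1))
      (fun p q h => by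
        obtain ⟨h1, h2⟩ : p.2 = q.2 ∧ p.1 = q.1 := by simpa [Prod.ext_iff] using h
        exact Prod.ext h2 h1)
  have r2 : entH μ (fun ω => (fC ω, fB ω)) = entH μ (fun ω => (fB ω, fC ω)) :=
    entH_comp_inj μ (fun ω => (fB ω, fC ω)) (fun p => (p.2, p.1))
      (fun p q h => by
        obtain ⟨h1, h2⟩ : p.2 = q.2 ∧ p.1 = q.1 := by simpa [Prod.ext_iff] using h
        exact Prod.ext h2 h1)
  have r3 : entH μ (fun ω => ((fB ω, fC ω), fA ω)) = entH μ (fun ω => ((fA ω, fC ω), fB ω)) :=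
    entH_comp_inj μ (fun ω => ((fA ω, fC ω), fB ω)) (fun p => ((p.2, p.1.2), p.1.1))
      (fun p q h => by
        obtain ⟨⟨h1, h2⟩, h3⟩ : (p.2 = q.2 ∧ p.1.2 = q.1.2) ∧ p.1.1 = q.1.1 := by
          simpa [Prod.ext_iff] using h
        exact Prod.ext (Prod.ext h3 h2) h1)
  beta_reduce
  linarith

variable [IsProbabilityMeasure μ]

/-- Conditioning on an independent event preserves preimage probabilities. -/
lemma cond_preimage_of_indep {CT TT : Type*} [MeasurableSpace CT] [MeasurableSpace TT]
    [MeasurableSingletonClass CT] [Finite TT] [MeasurableSingletonClass TT]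
    {Cf : Ω → CT} {Tf : Ω → TT} (hind : IndepFun Cf Tf μ) {c : CT}
    (hCf : MeasurableSet (Cf ⁻¹' {c})) (hc : μ (Cf ⁻¹' {c}) ≠ 0) (B : Set TT) :
    μ[|Cf ⁻¹' {c}] (Tf ⁻¹' B) = μ (Tf ⁻¹' B) := by
  rw [cond_apply hCf]
  rw [hind.measure_inter_preimage_eq_mul {c} B (measurableSet_singleton c)
    (Set.toFinite B).measurableSet]
  rw [← mul_assoc, ENNReal.inv_mul_cancel hc (measure_ne_top μ _), one_mul]

lemma pm_cond_of_indep {CT TT S' : Type*} [MeasurableSpace CT] [MeasurableSpace TT]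
    [MeasurableSingletonClass CT] [Finite TT] [MeasurableSingletonClass TT]
    {Cf : Ω → CT} {Tf : Ω → TT} (hind : IndepFun Cf Tf μ) {c : CT}
    (hCf : MeasurableSet (Cf ⁻¹' {c})) (hc : μ (Cf ⁻¹' {c}) ≠ 0) (g : TT → S') (s : S') :
    pm (μ[|Cf ⁻¹' {c}]) (fun ω => g (Tf ω)) s = pm μ (fun ω => g (Tf ω)) s := by
  unfold pm
  exact congrArg ENNReal.toReal (cond_preimage_of_indep μ hind hCf hc (g ⁻¹' {s}))

lemma entH_cond_of_indep {CT TT S' : Type*} [MeasurableSpace CT] [MeasurableSpace TT]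
    [MeasurableSingletonClass CT] [Finite TT] [MeasurableSingletonClass TT] [Fintype S']
    {Cf : Ω → CT} {Tf : Ω → TT} (hind : IndepFun Cf Tf μ) {c : CT}
    (hCf : MeasurableSet (Cf ⁻¹' {c})) (hc : μ (Cf ⁻¹' {c}) ≠ 0) (g : TT → S') :
    entH (μ[|Cf ⁻¹' {c}]) (fun ω => g (Tf ω)) = entH μ (fun ω => g (Tf ω)) := by
  unfold entH
  refine Finset.sum_congr rfl fun s _ => ?_
  exact congrArg (fun z => Real.negMulLog z.toReal)
    (cond_preimage_of_indep μ hind hCf hc (g ⁻¹' {s}))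

lemma condEntH_cond_of_indep {CT TT S1 S2 : Type*} [MeasurableSpace CT] [MeasurableSpace TT]
    [MeasurableSingletonClass CT] [Finite TT] [MeasurableSingletonClass TT]
    [Fintype S1] [Fintype S2]
    {Cf : Ω → CT} {Tf : Ω → TT} (hind : IndepFun Cf Tf μ) {c : CT}
    (hCf : MeasurableSet (Cf ⁻¹' {c})) (hc : μ (Cf ⁻¹' {c}) ≠ 0)
    (g1 : TT → S1) (g2 : TT → S2) :
    condEntH (μ[|Cf ⁻¹' {c}]) (fun ω => g2 (Tf ω)) (fun ω => g1 (Tf ω))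
      = condEntH μ (fun ω => g2 (Tf ω)) (fun ω => g1 (Tf ω)) := by
  unfold condEntH
  rw [entH_cond_of_indep μ hind hCf hc g1,
    entH_cond_of_indep μ hind hCf hc (fun t => (g1 t, g2 t))]

end SatLB

namespace SatLB

variable {Ω : Type*} [MeasurableSpace Ω] (μ : Measure Ω) [IsProbabilityMeasure μ]

lemma hfac_of_iIndep {𝓧 : Type*} [MeasurableSpace 𝓧] [MeasurableSingletonClass 𝓧]
    {M : ℕ} {𝓤 : Fin M → Type*} [∀ j, Fintype (𝓤 j)] [∀ j, Nonempty (𝓤 j)]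
    [∀ j, MeasurableSpace (𝓤 j)] [∀ j, DiscreteMeasurableSpace (𝓤 j)]
    (X : Ω → 𝓧) (U : ∀ j, Ω → 𝓤 j) (hX : Measurable X)
    (hb : ∀ x : 𝓧, μ (X ⁻¹' {x}) ≠ 0 →
        iIndepFun U (μ[|X ⁻¹' {x}]))
    (T : Finset (Fin M)) (j : Fin M) (hj : j ∉ T)
    (x : 𝓧) (u : ∀ i : T, 𝓤 i) (a : 𝓤 j) :
    pm μ (fun ω => (X ω, (fun i : T => U i ω), U j ω)) (x, u, a) * pm μ X x
      = pm μ (fun ω => (X ω, (fun i : T => U i ω))) (x, u)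
        * pm μ (fun ω => (X ω, U j ω)) (x, a) := by
  classical
  by_cases hx : μ (X ⁻¹' {x}) = 0
  · have hz1 : pm μ (fun ω => (X ω, (fun i : T => U i ω), U j ω)) (x, u, a) = 0 := by
      unfold pm
      have hsub : (fun ω => (X ω, (fun i : T => U i ω), U j ω)) ⁻¹' {(x, u, a)}
          ⊆ X ⁻¹' {x} := by
        intro ω h
        simp only [Set.mem_preimage, Set.mem_singleton_iff, Prod.ext_iff] at h ⊢
        exact h.1
      rw [measure_mono_null hsub hx]
      simp
    have hz2 : pm μ (fun ω => (X ω, (fun i : T => U i ω))) (x, u) = 0 := by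
      unfold pm
      have hsub : (fun ω => (X ω, (fun i : T => U i ω))) ⁻¹' {(x, u)} ⊆ X ⁻¹' {x} := by
        intro ω h
        simp only [Set.mem_preimage, Set.mem_singleton_iff, Prod.ext_iff] at h ⊢
        exact h.1
      rw [measure_mono_null hsub hx]
      simp
    rw [hz1, hz2]
    ring
  · set νx := μ[|X ⁻¹' {x}] with hνx
    set s : ∀ _ : Fin M, Set Ω := fun i =>
      if h : i ∈ T then (U i) ⁻¹' {u ⟨i, h⟩}
      else if h2 : i = j then (U i) ⁻¹' {(h2.symm ▸ a : 𝓤 i)} else Set.univ with hs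
    have hsj : s j = (U j) ⁻¹' {a} := by
      rw [hs]
      simp only [dif_neg hj]
      simp
    have hsT : ∀ (i : Fin M) (h : i ∈ T), s i = (U i) ⁻¹' {u ⟨i, h⟩} := by
      intro i h
      rw [hs]
      simp only [dif_pos h]
    have hmeas : ∀ i : Fin M,
        MeasurableSet[(inferInstance : MeasurableSpace (𝓤 i)).comap (U i)] (s i) := by
      intro i
      by_cases h : i ∈ T
      · rw [hsT i h]; exact ⟨{u ⟨i, h⟩}, measurableSet_singleton _, rfl⟩
      · by_cases h2 : i = j
        · rw [hs]; simp only [dif_neg h, dif_pos h2]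
          exact ⟨_, measurableSet_singleton _, rfl⟩
        · rw [hs]; simp only [dif_neg h, dif_neg h2]
          exact ⟨Set.univ, MeasurableSet.univ, Set.preimage_univ⟩
    have hbx := hb x hx
    have hprod1 : νx (⋂ i ∈ insert j T, s i) = ∏ i ∈ insert j T, νx (s i) :=
      hbx.meas_biInter (fun i _ => hmeas i)
    have hprod2 : νx (⋂ i ∈ T, s i) = ∏ i ∈ T, νx (s i) :=
      hbx.meas_biInter (fun i _ => hmeas i)
    have hins : νx (⋂ i ∈ insert j T, s i) = νx (s j) * νx (⋂ i ∈ T, s i) := by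
      rw [hprod1, hprod2, Finset.prod_insert hj]
    have hTset : (⋂ i ∈ T, s i) = (fun ω (i : T) => U i ω) ⁻¹' {u} := by
      ext ω
      simp only [Set.mem_iInter, Set.mem_preimage, Set.mem_singleton_iff, funext_iff]
      constructor
      · intro h i
        have h' := h ↑i i.2
        rw [hsT ↑i i.2] at h'
        simpa using h'
      · intro h i hi
        rw [hsT i hi]
        exact h ⟨i, hi⟩
    have hinsset : (⋂ i ∈ insert j T, s i) = s j ∩ ⋂ i ∈ T, s i := by
      rw [Finset.set_biInter_insert]
    have hjoint : ∀ A : Set Ω, μ (X ⁻¹' {x} ∩ A) = μ (X ⁻¹' {x}) * νx A := by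
      intro A
      rw [hνx, cond_apply (hX (measurableSet_singleton x)), ← mul_assoc,
        ENNReal.mul_inv_cancel hx (measure_ne_top μ _), one_mul]
    have hE1 : (fun ω => (X ω, (fun i : T => U i ω), U j ω)) ⁻¹' {(x, u, a)}
        = X ⁻¹' {x} ∩ ((⋂ i ∈ T, s i) ∩ s j) := by
      rw [hTset, hsj]
      ext ω
      simp only [Set.mem_preimage, Set.mem_singleton_iff, Set.mem_inter_iff, Prod.ext_iff]
    have hE2 : (fun ω => (X ω, (fun i : T => U i ω))) ⁻¹' {(x, u)}
        = X ⁻¹' {x} ∩ ⋂ i ∈ T, s i := by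
      rw [hTset]
      ext ω
      simp only [Set.mem_preimage, Set.mem_singleton_iff, Set.mem_inter_iff, Prod.ext_iff]
    have hE3 : (fun ω => (X ω, U j ω)) ⁻¹' {(x, a)} = X ⁻¹' {x} ∩ s j := by
      rw [hsj]
      ext ω
      simp only [Set.mem_preimage, Set.mem_singleton_iff, Set.mem_inter_iff, Prod.ext_iff]
    have hν12 : νx ((⋂ i ∈ T, s i) ∩ s j) = νx (⋂ i ∈ T, s i) * νx (s j) := by
      rw [Set.inter_comm, ← hinsset, hins]
      ring
    unfold pm
    rw [hE1, hE2, hE3, hjoint, hjoint, hjoint, hν12]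
    simp only [ENNReal.toReal_mul]
    ring
end SatLB


open SatLB in
/-- **Saturated lower bound (in expectation).**
Under the independent evidence-bits model (sufficiency, conditional independence given `X`,
matching uncertainty scale) and the fractional-coverage model (coverage indicators `C`
independent of `(X, Y, U)`, each with probability `α`, independent across channels for each
fixed bit, and a covered bit has zero residual entropy), the expected recoverable information
satisfies `E_c[I(Z̃; Y | X)] ≥ H(Y | X)·(1 − (1 − α)^K) ≥ H(Y | X)·(1 − e^{−αK})`. -/
theorem saturated_lower_bound_effective_channels
    {Ω : Type*} [MeasurableSpace Ω] (μ : Measure Ω) [IsProbabilityMeasure μ]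
    {𝓧 𝓨 : Type*} [Fintype 𝓧] [Nonempty 𝓧] [Fintype 𝓨] [Nonempty 𝓨]
    [MeasurableSpace 𝓧] [DiscreteMeasurableSpace 𝓧]
    [MeasurableSpace 𝓨] [DiscreteMeasurableSpace 𝓨]
    {M K : ℕ} (hM : 0 < M) (hK : 0 < K)
    {𝓤 : Fin M → Type*} [∀ j, Fintype (𝓤 j)] [∀ j, Nonempty (𝓤 j)]
    [∀ j, MeasurableSpace (𝓤 j)] [∀ j, DiscreteMeasurableSpace (𝓤 j)]
    {𝓩 : Fin K → Type*} [∀ k, Fintype (𝓩 k)] [∀ k, Nonempty (𝓩 k)]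
    [∀ k, MeasurableSpace (𝓩 k)] [∀ k, DiscreteMeasurableSpace (𝓩 k)]
    (X : Ω → 𝓧) (Y : Ω → 𝓨) (U : ∀ j, Ω → 𝓤 j) (Ztil : ∀ k, Ω → 𝓩 k)
    (C : Ω → (Fin M → Fin K → Bool))
    (hX : Measurable X) (hY : Measurable Y) (hU : ∀ j, Measurable (U j))
    (hZtil : ∀ k, Measurable (Ztil k)) (hC : Measurable C)
    {α : ℝ} (hα : α ∈ Set.Ioo (0 : ℝ) 1)
    -- (a) sufficiency: H(Y | X, U) = 0
    (ha : condEntH μ Y (fun ω => (X ω, fun j => U j ω)) = 0)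
    -- (b) the U_j are mutually conditionally independent given X
    (hb : ∀ x : 𝓧, μ (X ⁻¹' {x}) ≠ 0 →
        iIndepFun U (μ[|X ⁻¹' {x}]))
    -- (c) matching uncertainty scale: H(U | X) = H(Y | X)
    (hc : condEntH μ (fun ω (j : Fin M) => U j ω) X = condEntH μ Y X)
    -- (d) coverage indicators: independent of (X, Y, U), each of probability α,
    --     and independent across channels for each fixed bit j
    (hd1 : IndepFun C (fun ω => (X ω, Y ω, fun j => U j ω)) μ)
    (hd2 : ∀ j k, μ {ω | C ω j k = true} = ENNReal.ofReal α)
    (hd3 : ∀ j : Fin M, iIndepFun (fun k ω => C ω j k) μ)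
    -- (e) a covered bit has zero residual entropy given (X, Z̃)
    (he : ∀ c : Fin M → Fin K → Bool, μ (C ⁻¹' {c}) ≠ 0 → ∀ j : Fin M,
        (∃ k, c j k = true) →
        condEntH (μ[|C ⁻¹' {c}]) (U j) (fun ω => (X ω, fun k => Ztil k ω)) = 0) :
    (∑ c : Fin M → Fin K → Bool, (μ (C ⁻¹' {c})).toReal *
        condMI (μ[|C ⁻¹' {c}]) (fun ω (k : Fin K) => Ztil k ω) Y X)
      ≥ condEntH μ Y X * (1 - (1 - α) ^ K) ∧
    condEntH μ Y X * (1 - (1 - α) ^ K) ≥ condEntH μ Y X * (1 - Real.exp (-(α * K))) := by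
    classical
  have fmX : FM X := FM.of_measurable hX
  have fmY : FM Y := FM.of_measurable hY
  have fmU : ∀ j, FM (U j) := fun j => FM.of_measurable (hU j)
  have fmZ : ∀ k, FM (Ztil k) := fun k => FM.of_measurable (hZtil k)
  have fmUf : FM (fun ω (j : Fin M) => U j ω) := FM.tuple fmU
  have fmZt : FM (fun ω (k : Fin K) => Ztil k ω) := FM.tuple fmZ
  have fmC : FM C := FM.of_measurable hC
  have fmUT : ∀ T : Finset (Fin M), FM (fun ω (i : T) => U i ω) :=
    fun T => FM.tuple (fun i => fmU ↑i)
  have hH0 : 0 ≤ condEntH μ Y X := condEntH_nonneg μ fmX fmY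
  -- claim 1 : additivity of conditional entropy over independent bits
  have claim1 : ∀ T : Finset (Fin M),
      condEntH μ (fun ω (i : T) => U i ω) X = ∑ j ∈ T, condEntH μ (U j) X := by
    intro T
    induction T using Finset.induction_on with
    | empty =>
      haveI : IsEmpty (↥(∅ : Finset (Fin M))) := ⟨fun i => (Finset.notMem_empty _ i.2)⟩
      rw [Finset.sum_empty]
      exact condEntH_subsingleton μ X _
    | @insert j T hj ih =>
      have hφ : Function.Injective (fun (v : ∀ i : (insert j T : Finset (Fin M)), 𝓤 i) =>
          (v ⟨j, Finset.mem_insert_self j T⟩,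
            fun i : T => v ⟨i, Finset.mem_insert_of_mem i.2⟩)) := by
        intro v1 v2 hv
        obtain ⟨h1, h2⟩ := Prod.ext_iff.mp hv
        funext ⟨i, hi⟩
        rcases Finset.mem_insert.mp hi with h | h
        · subst h; exact h1
        · exact congrFun h2 ⟨i, h⟩
      calc condEntH μ (fun ω (i : (insert j T : Finset (Fin M))) => U i ω) X
          = condEntH μ (fun ω => (U j ω, fun (i : T) => U i ω)) X :=
            (condEntH_comp_left μ X (fun ω (i : (insert j T : Finset (Fin M))) => U i ω)
              _ hφ).symm
        _ = condEntH μ (fun ω (i : T) => U i ω) X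
            + condEntH μ (U j) (fun ω => ((fun (i : T) => U i ω), X ω)) :=
            condEntH_pair_split μ (U j) (fun ω (i : T) => U i ω) X
        _ = condEntH μ (fun ω (i : T) => U i ω) X + condEntH μ (U j) X := by
            rw [condEntH_factor μ (fmU j) (fmUT T) fmX
              (fun x u a => hfac_of_iIndep μ X U hX hb T j hj x u a)]
        _ = ∑ i ∈ insert j T, condEntH μ (U i) X := by
            rw [Finset.sum_insert hj, ih]; ring
  have hcall : condEntH μ Y X = ∑ j : Fin M, condEntH μ (U j) X := by
    have huinj : Function.Injective
        (fun (v : ∀ j : Fin M, 𝓤 j) (i : (Finset.univ : Finset (Fin M))) => v ↑i) := by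
      intro v1 v2 hv
      funext i
      exact congrFun hv ⟨i, Finset.mem_univ i⟩
    calc condEntH μ Y X = condEntH μ (fun ω (j : Fin M) => U j ω) X := hc.symm
      _ = condEntH μ (fun ω (i : (Finset.univ : Finset (Fin M))) => U i ω) X :=
          (condEntH_comp_left μ X (fun ω (j : Fin M) => U j ω) _ huinj).symm
      _ = ∑ j : Fin M, condEntH μ (U j) X := claim1 Finset.univ
  -- per-configuration lower bound
  have percbound : ∀ c : Fin M → Fin K → Bool, μ (C ⁻¹' {c}) ≠ 0 →
      (∑ j ∈ Finset.univ.filter (fun j => ∃ k, c j k = true), condEntH μ (U j) X)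
        ≤ condMI (μ[|C ⁻¹' {c}]) (fun ω (k : Fin K) => Ztil k ω) Y X := by
    intro c hcne
    haveI : IsProbabilityMeasure (μ[|C ⁻¹' {c}]) := cond_isProbabilityMeasure hcne
    have htrE : MeasurableSet (C ⁻¹' {c}) := fmC c
    set ν := μ[|C ⁻¹' {c}] with hν
    -- claim 2: residual entropy bound
    have claim2 : ∀ T : Finset (Fin M),
        condEntH ν (fun ω (i : T) => U i ω)
            (fun ω => ((fun (k : Fin K) => Ztil k ω), X ω))
          ≤ ∑ j ∈ T.filter (fun j => ¬∃ k, c j k = true), condEntH μ (U j) X := by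
      intro T
      induction T using Finset.induction_on with
      | empty =>
        haveI : IsEmpty (↥(∅ : Finset (Fin M))) := ⟨fun i => (Finset.notMem_empty _ i.2)⟩
        rw [show ((∅ : Finset (Fin M)).filter (fun j => ¬∃ k, c j k = true)) = ∅ from
          Finset.filter_empty _, Finset.sum_empty]
        exact le_of_eq (condEntH_subsingleton ν _ _)
      | @insert j T hj ih =>
        have hφ : Function.Injective (fun (v : ∀ i : (insert j T : Finset (Fin M)), 𝓤 i) =>
            (v ⟨j, Finset.mem_insert_self j T⟩,
              fun i : T => v ⟨i, Finset.mem_insert_of_mem i.2⟩)) := by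
          intro v1 v2 hv
          obtain ⟨h1, h2⟩ := Prod.ext_iff.mp hv
          funext ⟨i, hi⟩
          rcases Finset.mem_insert.mp hi with h | h
          · subst h; exact h1
          · exact congrFun h2 ⟨i, h⟩
        have hsplit : condEntH ν (fun ω (i : (insert j T : Finset (Fin M))) => U i ω)
              (fun ω => ((fun (k : Fin K) => Ztil k ω), X ω))
            = condEntH ν (fun ω (i : T) => U i ω)
                (fun ω => ((fun (k : Fin K) => Ztil k ω), X ω))
              + condEntH ν (U j) (fun ω => ((fun (i : T) => U i ω),
                  ((fun (k : Fin K) => Ztil k ω), X ω))) := by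
          have e1 : condEntH ν (fun ω (i : (insert j T : Finset (Fin M))) => U i ω)
              (fun ω => ((fun (k : Fin K) => Ztil k ω), X ω))
              = condEntH ν (fun ω => (U j ω, fun (i : T) => U i ω))
                  (fun ω => ((fun (k : Fin K) => Ztil k ω), X ω)) :=
            (condEntH_comp_left ν (fun ω => ((fun (k : Fin K) => Ztil k ω), X ω))
              (fun ω (i : (insert j T : Finset (Fin M))) => U i ω) _ hφ).symm
          exact e1.trans (condEntH_pair_split ν (U j) (fun ω (i : T) => U i ω)
            (fun ω => ((fun (k : Fin K) => Ztil k ω), X ω)))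
        by_cases hcov : ∃ k, c j k = true
        · have hle0 : condEntH ν (U j) (fun ω => ((fun (i : T) => U i ω),
                ((fun (k : Fin K) => Ztil k ω), X ω))) ≤ 0 := by
            calc condEntH ν (U j) (fun ω => ((fun (i : T) => U i ω),
                  ((fun (k : Fin K) => Ztil k ω), X ω)))
                ≤ condEntH ν (U j) (fun ω => ((fun (k : Fin K) => Ztil k ω), X ω)) :=
                  condEntH_pair_cond_le ν (fmU j) (fmUT T) (fmZt.pair fmX)
              _ = condEntH ν (U j) (fun ω => (X ω, fun (k : Fin K) => Ztil k ω)) := by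
                  exact condEntH_comp_right ν (fun ω => (X ω, fun (k : Fin K) => Ztil k ω))
                    (U j) Prod.swap Prod.swap_injective
              _ = 0 := he c hcne j hcov
          have hge0 : 0 ≤ condEntH ν (U j) (fun ω => ((fun (i : T) => U i ω),
                ((fun (k : Fin K) => Ztil k ω), X ω))) :=
            condEntH_nonneg ν ((fmUT T).pair (fmZt.pair fmX)) (fmU j)
          rw [hsplit, Finset.filter_insert, if_neg (not_not_intro hcov)]
          linarith
        · -- uncovered bit
          have hfacν : ∀ (x : 𝓧) (u : ∀ i : T, 𝓤 i) (a : 𝓤 j),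
              pm ν (fun ω => (X ω, (fun i : T => U i ω), U j ω)) (x, u, a) * pm ν X x
                = pm ν (fun ω => (X ω, (fun i : T => U i ω))) (x, u)
                  * pm ν (fun ω => (X ω, U j ω)) (x, a) := by
            intro x u a
            have t1 : pm ν (fun ω => (X ω, (fun i : T => U i ω), U j ω)) (x, u, a)
                = pm μ (fun ω => (X ω, (fun i : T => U i ω), U j ω)) (x, u, a) :=
              pm_cond_of_indep μ hd1 htrE hcne
                (fun p => (p.1, (fun i : T => p.2.2 ↑i), p.2.2 j)) (x, u, a)
            have t2 : pm ν X x = pm μ X x :=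
              pm_cond_of_indep μ hd1 htrE hcne (fun p => p.1) x
            have t3 : pm ν (fun ω => (X ω, (fun i : T => U i ω))) (x, u)
                = pm μ (fun ω => (X ω, (fun i : T => U i ω))) (x, u) :=
              pm_cond_of_indep μ hd1 htrE hcne
                (fun p => (p.1, (fun i : T => p.2.2 ↑i))) (x, u)
            have t4 : pm ν (fun ω => (X ω, U j ω)) (x, a)
                = pm μ (fun ω => (X ω, U j ω)) (x, a) :=
              pm_cond_of_indep μ hd1 htrE hcne (fun p => (p.1, p.2.2 j)) (x, a)
            rw [t1, t2, t3, t4]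
            exact hfac_of_iIndep μ X U hX hb T j hj x u a
          have hle : condEntH ν (U j) (fun ω => ((fun (i : T) => U i ω),
                ((fun (k : Fin K) => Ztil k ω), X ω))) ≤ condEntH μ (U j) X := by
            calc condEntH ν (U j) (fun ω => ((fun (i : T) => U i ω),
                  ((fun (k : Fin K) => Ztil k ω), X ω)))
                = condEntH ν (U j) (fun ω => ((fun (k : Fin K) => Ztil k ω),
                    ((fun (i : T) => U i ω), X ω))) :=
                  (condEntH_comp_right ν
                    (fun ω => ((fun (k : Fin K) => Ztil k ω), ((fun (i : T) => U i ω), X ω)))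
                    (U j) (fun p => (p.2.1, (p.1, p.2.2)))
                    (fun p q h => by
                      obtain ⟨h1, h2, h3⟩ : p.2.1 = q.2.1 ∧ p.1 = q.1 ∧ p.2.2 = q.2.2 := by
                        simpa [Prod.ext_iff] using h
                      exact Prod.ext h2 (Prod.ext h1 h3)))
              _ ≤ condEntH ν (U j) (fun ω => ((fun (i : T) => U i ω), X ω)) :=
                  condEntH_pair_cond_le ν (fmU j) fmZt ((fmUT T).pair fmX)
              _ = condEntH ν (U j) X :=
                  condEntH_factor ν (fmU j) (fmUT T) fmX hfacν
              _ = condEntH μ (U j) X :=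
                  condEntH_cond_of_indep μ hd1 htrE hcne (fun p => p.1) (fun p => p.2.2 j)
          have hjnotmem : j ∉ T.filter (fun j => ¬∃ k, c j k = true) :=
            fun hmem => hj (Finset.mem_of_mem_filter j hmem)
          rw [hsplit, Finset.filter_insert, if_pos hcov, Finset.sum_insert hjnotmem]
          linarith
    -- symmetry of conditional mutual information
    have hsym : condMI ν (fun ω (k : Fin K) => Ztil k ω) Y X
        = condEntH ν Y X
          - condEntH ν Y (fun ω => ((fun (k : Fin K) => Ztil k ω), X ω)) :=
      condMI_symm ν (fun ω (k : Fin K) => Ztil k ω) Y X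
    -- sufficiency: Y is determined by (X, U)
    obtain ⟨f, hfnull⟩ := exists_ae_of_condEntH_eq_zero μ (fmX.pair fmUf) fmY ha
    have hνnull : ν {ω | Y ω ≠ f (X ω, fun j => U j ω)} = 0 :=
      cond_absolutelyContinuous hfnull
    have hYdet : condEntH ν Y (fun ω => ((fun (j : Fin M) => U j ω),
        ((fun (k : Fin K) => Ztil k ω), X ω))) = 0 :=
      condEntH_eq_zero_of_ae ν (fmUf.pair (fmZt.pair fmX)) fmY
        (fun p => f (p.2.2, p.1)) hνnull
    -- bound H(Y | Z, X) by the residual entropy of U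
    have hswap : condEntH ν (fun ω => ((fun (j : Fin M) => U j ω), Y ω))
          (fun ω => ((fun (k : Fin K) => Ztil k ω), X ω))
        = condEntH ν (fun ω => (Y ω, (fun (j : Fin M) => U j ω)))
          (fun ω => ((fun (k : Fin K) => Ztil k ω), X ω)) :=
      condEntH_comp_left ν (fun ω => ((fun (k : Fin K) => Ztil k ω), X ω))
        (fun ω => (Y ω, (fun (j : Fin M) => U j ω))) (fun p => (p.2, p.1))
        (fun p q h => by
          obtain ⟨h1, h2⟩ : p.2 = q.2 ∧ p.1 = q.1 := by simpa [Prod.ext_iff] using h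
          exact Prod.ext h2 h1)
    have hYle : condEntH ν Y (fun ω => ((fun (k : Fin K) => Ztil k ω), X ω))
        ≤ condEntH ν (fun ω (j : Fin M) => U j ω)
            (fun ω => ((fun (k : Fin K) => Ztil k ω), X ω)) := by
      calc condEntH ν Y (fun ω => ((fun (k : Fin K) => Ztil k ω), X ω))
          ≤ condEntH ν (fun ω => ((fun (j : Fin M) => U j ω), Y ω))
              (fun ω => ((fun (k : Fin K) => Ztil k ω), X ω)) :=
            condEntH_le_pair ν fmUf fmY (fmZt.pair fmX)
        _ = condEntH ν (fun ω => (Y ω, (fun (j : Fin M) => U j ω)))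
              (fun ω => ((fun (k : Fin K) => Ztil k ω), X ω)) := hswap
        _ = condEntH ν (fun ω (j : Fin M) => U j ω)
              (fun ω => ((fun (k : Fin K) => Ztil k ω), X ω))
            + condEntH ν Y (fun ω => ((fun (j : Fin M) => U j ω),
                ((fun (k : Fin K) => Ztil k ω), X ω))) :=
            condEntH_pair_split ν Y (fun ω (j : Fin M) => U j ω)
              (fun ω => ((fun (k : Fin K) => Ztil k ω), X ω))
        _ = condEntH ν (fun ω (j : Fin M) => U j ω)
              (fun ω => ((fun (k : Fin K) => Ztil k ω), X ω)) := by rw [hYdet]; ring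
    -- relabel the full tuple through Finset.univ
    have huinj : Function.Injective
        (fun (v : ∀ j : Fin M, 𝓤 j) (i : (Finset.univ : Finset (Fin M))) => v ↑i) := by
      intro v1 v2 hv
      funext i
      exact congrFun hv ⟨i, Finset.mem_univ i⟩
    have hUuniv : condEntH ν (fun ω (j : Fin M) => U j ω)
          (fun ω => ((fun (k : Fin K) => Ztil k ω), X ω))
        = condEntH ν (fun ω (i : (Finset.univ : Finset (Fin M))) => U i ω)
          (fun ω => ((fun (k : Fin K) => Ztil k ω), X ω)) :=
      (condEntH_comp_left ν (fun ω => ((fun (k : Fin K) => Ztil k ω), X ω))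
        (fun ω (j : Fin M) => U j ω) _ huinj).symm
    -- transfer H(Y|X) to the unconditioned measure
    have hYXtrans : condEntH ν Y X = condEntH μ Y X :=
      condEntH_cond_of_indep μ hd1 htrE hcne (fun p => p.1) (fun p => p.2.1)
    -- put everything together
    have hfilters : (∑ j ∈ Finset.univ.filter (fun j => ∃ k, c j k = true),
          condEntH μ (U j) X)
        + ∑ j ∈ Finset.univ.filter (fun j => ¬∃ k, c j k = true), condEntH μ (U j) X
        = ∑ j : Fin M, condEntH μ (U j) X :=
      Finset.sum_filter_add_sum_filter_not Finset.univ _ _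
    have h2 := claim2 Finset.univ
    rw [hsym, hYXtrans]
    have := hYle.trans (le_of_eq hUuniv) |>.trans h2
    rw [hcall]
    linarith
  -- expectation step
  have hstep : ∀ c : Fin M → Fin K → Bool,
      (μ (C ⁻¹' {c})).toReal
          * ∑ j ∈ Finset.univ.filter (fun j => ∃ k, c j k = true), condEntH μ (U j) X
        ≤ (μ (C ⁻¹' {c})).toReal
          * condMI (μ[|C ⁻¹' {c}]) (fun ω (k : Fin K) => Ztil k ω) Y X := by
    intro c
    by_cases hc0 : μ (C ⁻¹' {c}) = 0
    · rw [hc0]; simp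
    · exact mul_le_mul_of_nonneg_left (percbound c hc0) ENNReal.toReal_nonneg
  have hcovmeasure : ∀ j : Fin M,
      (∑ c ∈ Finset.univ.filter (fun c : Fin M → Fin K → Bool => ∃ k, c j k = true),
        (μ (C ⁻¹' {c})).toReal) = 1 - (1 - α) ^ K := by
    intro j
    have hCk : ∀ k, Measurable (fun ω => C ω j k) :=
      fun k => (measurable_pi_apply k).comp ((measurable_pi_apply j).comp hC)
    have hunion : (∑ c ∈ Finset.univ.filter (fun c : Fin M → Fin K → Bool => ∃ k, c j k = true),
        μ (C ⁻¹' {c})) = μ {ω | ∃ k, C ω j k = true} := by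
      rw [sum_measure_preimage_singleton _ (fun c _ => fmC c)]
      congr 1
      ext ω
      simp only [Finset.coe_filter, Finset.mem_univ, true_and, Set.mem_preimage,
        Set.mem_setOf_eq]
    have hIset : {ω | ∃ k, C ω j k = true} = (⋂ k, (fun ω => C ω j k) ⁻¹' {false})ᶜ := by
      ext ω
      simp only [Set.mem_setOf_eq, Set.mem_compl_iff, Set.mem_iInter, Set.mem_preimage,
        Set.mem_singleton_iff, not_forall, Bool.not_eq_false]
    have hmeasI : MeasurableSet (⋂ k, (fun ω => C ω j k) ⁻¹' {false}) :=
      MeasurableSet.iInter fun k => hCk k (measurableSet_singleton false)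
    have hPfalse : ∀ k, μ ((fun ω => C ω j k) ⁻¹' {false}) = ENNReal.ofReal (1 - α) := by
      intro k
      have hcomp : (fun ω => C ω j k) ⁻¹' {false} = ((fun ω => C ω j k) ⁻¹' {true})ᶜ := by
        ext ω
        simp only [Set.mem_preimage, Set.mem_singleton_iff, Set.mem_compl_iff,
          Bool.not_eq_true]
      have hd2' : μ ((fun ω => C ω j k) ⁻¹' {true}) = ENNReal.ofReal α := hd2 j k
      rw [hcomp, measure_compl (hCk k (measurableSet_singleton true)) (measure_ne_top μ _),
        measure_univ, hd2', ← ENNReal.ofReal_one,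
        ← ENNReal.ofReal_sub 1 (le_of_lt hα.1)]
    have hIprob : μ (⋂ k, (fun ω => C ω j k) ⁻¹' {false})
        = ENNReal.ofReal ((1 - α) ^ K) := by
      rw [(hd3 j).meas_iInter (fun k => ⟨{false}, measurableSet_singleton _, rfl⟩)]
      simp only [hPfalse]
      rw [Finset.prod_const, Finset.card_univ, Fintype.card_fin,
        ← ENNReal.ofReal_pow (by linarith [hα.2])]
    have hfinal : μ {ω | ∃ k, C ω j k = true} = 1 - ENNReal.ofReal ((1 - α) ^ K) := by
      rw [hIset, measure_compl hmeasI (measure_ne_top μ _), measure_univ, hIprob]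
    have hsumtr : (∑ c ∈ Finset.univ.filter
          (fun c : Fin M → Fin K → Bool => ∃ k, c j k = true), (μ (C ⁻¹' {c})).toReal)
        = (μ {ω | ∃ k, C ω j k = true}).toReal := by
      rw [← ENNReal.toReal_sum (fun c _ => measure_ne_top μ _), hunion]
    rw [hsumtr, hfinal, ENNReal.toReal_sub_of_le
        (ENNReal.ofReal_le_one.mpr (pow_le_one₀ (by linarith [hα.2]) (by linarith [hα.1]) ))
        ENNReal.one_ne_top,
      ENNReal.toReal_one, ENNReal.toReal_ofReal (pow_nonneg (by linarith [hα.2]) K)]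
  have hswapsum : (∑ c : Fin M → Fin K → Bool, (μ (C ⁻¹' {c})).toReal
        * ∑ j ∈ Finset.univ.filter (fun j => ∃ k, c j k = true), condEntH μ (U j) X)
      = ∑ j : Fin M, (1 - (1 - α) ^ K) * condEntH μ (U j) X := by
    have e1 : ∀ c : Fin M → Fin K → Bool, (μ (C ⁻¹' {c})).toReal
          * ∑ j ∈ Finset.univ.filter (fun j => ∃ k, c j k = true), condEntH μ (U j) X
        = ∑ j : Fin M, if (∃ k, c j k = true)
            then (μ (C ⁻¹' {c})).toReal * condEntH μ (U j) X else 0 := by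
      intro c
      rw [Finset.mul_sum, Finset.sum_filter]
    rw [Finset.sum_congr rfl (fun c _ => e1 c), Finset.sum_comm]
    refine Finset.sum_congr rfl fun j _ => ?_
    rw [← Finset.sum_filter, ← Finset.sum_mul, hcovmeasure j]
  have hHeq : condEntH μ Y X * (1 - (1 - α) ^ K)
      = ∑ j : Fin M, (1 - (1 - α) ^ K) * condEntH μ (U j) X := by
    rw [hcall, Finset.sum_mul]
    exact Finset.sum_congr rfl fun j _ => mul_comm _ _
  constructor
  · calc (∑ c : Fin M → Fin K → Bool, (μ (C ⁻¹' {c})).toReal *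
          condMI (μ[|C ⁻¹' {c}]) (fun ω (k : Fin K) => Ztil k ω) Y X)
        ≥ ∑ c : Fin M → Fin K → Bool, (μ (C ⁻¹' {c})).toReal
            * ∑ j ∈ Finset.univ.filter (fun j => ∃ k, c j k = true), condEntH μ (U j) X :=
          Finset.sum_le_sum fun c _ => hstep c
      _ = ∑ j : Fin M, (1 - (1 - α) ^ K) * condEntH μ (U j) X := hswapsum
      _ = condEntH μ Y X * (1 - (1 - α) ^ K) := hHeq.symm
  · have h1 : (1 - α) ≤ Real.exp (-α) := by
      have := Real.add_one_le_exp (-α)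
      linarith
    have hpow : (1 - α) ^ K ≤ Real.exp (-(α * K)) := by
      calc (1 - α) ^ K ≤ (Real.exp (-α)) ^ K :=
            pow_le_pow_left₀ (by linarith [hα.2]) h1 K
        _ = Real.exp ((K : ℝ) * (-α)) := (Real.exp_nat_mul _ _).symm
        _ = Real.exp (-(α * K)) := by ring_nf
    have hsub : (1 - Real.exp (-(α * K))) ≤ (1 - (1 - α) ^ K) := by linarith
    exact mul_le_mul_of_nonneg_left hsub hH0
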